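/- arXiv:2603.04637 — 4 statements merged into one kernel-verified Lean document; each statement's English description precedes it below -/
import Mathlib

section
/- The first Coxeter integral evaluates to a rational multiple of π²: ∫_{0}^{π/2} arccos( cos θ / (1 + 2 cos θ) ) dθ = 5π²/24. -/
open Real Set MeasureTheory intervalIntegral

/-- Pattern A: derivative of arctan (k x / √(c - x²)). -/
lemma hasDerivAt_patA (c k x : ℝ) (hc : x ^ 2 < c) :
    HasDerivAt (fun y => arctan (k * y / Real.sqrt (c - y ^ 2)))
      (k * c / (Real.sqrt (c - x ^ 2) * (c + (k ^ 2 - 1) * x ^ 2))) x := by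
  have hpos : 0 < c - x ^ 2 := by linarith
  have hs : Real.sqrt (c - x ^ 2) > 0 := Real.sqrt_pos.mpr hpos
  have hs2 : Real.sqrt (c - x ^ 2) ^ 2 = c - x ^ 2 := Real.sq_sqrt hpos.le
  have h1 : HasDerivAt (fun y : ℝ => c - y ^ 2) (-(2 * x)) x := by
    simpa using ((hasDerivAt_pow 2 x).const_sub c)
  have h2 : HasDerivAt (fun y : ℝ => Real.sqrt (c - y ^ 2))
      (-(2 * x) / (2 * Real.sqrt (c - x ^ 2))) x := by
    have := (Real.hasDerivAt_sqrt hpos.ne').comp x h1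
    simpa [Function.comp_def, div_eq_inv_mul, mul_comm, mul_assoc, mul_left_comm] using this
  have h3 : HasDerivAt (fun y : ℝ => k * y) k x := by
    simpa using (hasDerivAt_id x).const_mul k
  have h4 : HasDerivAt (fun y : ℝ => k * y / Real.sqrt (c - y ^ 2))
      ((k * Real.sqrt (c - x ^ 2) - k * x * (-(2 * x) / (2 * Real.sqrt (c - x ^ 2)))) /
        (Real.sqrt (c - x ^ 2)) ^ 2) x := h3.div h2 hs.ne'
  have h5 := (Real.hasDerivAt_arctan (k * x / Real.sqrt (c - x ^ 2))).comp x h4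
  refine HasDerivAt.congr_deriv (h5) (Eq.symm ?_)
  have hden : c + (k ^ 2 - 1) * x ^ 2 = (c - x ^ 2) + k ^ 2 * x ^ 2 := by ring
  have hdenpos : 0 < c + (k ^ 2 - 1) * x ^ 2 := by
    rw [hden]; positivity
  field_simp
  rw [hs2, div_eq_iff (by rw [mul_comm]; exact hdenpos.ne')]
  ring

/-- Pattern B: derivative of arctan (x / √(c + x²)). -/
lemma hasDerivAt_patB (c x : ℝ) (hc : 0 < c) :
    HasDerivAt (fun y => arctan (y / Real.sqrt (c + y ^ 2)))
      (c / (Real.sqrt (c + x ^ 2) * (c + 2 * x ^ 2))) x := by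
  have hpos : 0 < c + x ^ 2 := by positivity
  have hs : Real.sqrt (c + x ^ 2) > 0 := Real.sqrt_pos.mpr hpos
  have hs2 : Real.sqrt (c + x ^ 2) ^ 2 = c + x ^ 2 := Real.sq_sqrt hpos.le
  have h1 : HasDerivAt (fun y : ℝ => c + y ^ 2) (2 * x) x := by
    simpa using ((hasDerivAt_pow 2 x).const_add c)
  have h2 : HasDerivAt (fun y : ℝ => Real.sqrt (c + y ^ 2))
      (2 * x / (2 * Real.sqrt (c + x ^ 2))) x := by
    have := (Real.hasDerivAt_sqrt hpos.ne').comp x h1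
    simpa [Function.comp_def, div_eq_inv_mul, mul_comm, mul_assoc, mul_left_comm] using this
  have h4 : HasDerivAt (fun y : ℝ => y / Real.sqrt (c + y ^ 2))
      ((1 * Real.sqrt (c + x ^ 2) - x * (2 * x / (2 * Real.sqrt (c + x ^ 2)))) /
        (Real.sqrt (c + x ^ 2)) ^ 2) x := (hasDerivAt_id x).div h2 hs.ne'
  have h5 := (Real.hasDerivAt_arctan (x / Real.sqrt (c + x ^ 2))).comp x h4
  refine HasDerivAt.congr_deriv (h5) (Eq.symm ?_)
  field_simp
  linear_combination (-2 * x ^ 2) * hs2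

/-- Pattern C: derivative of arctan (√(c + x²)). -/
lemma hasDerivAt_patC (c x : ℝ) (hc : 0 < c) :
    HasDerivAt (fun y => arctan (Real.sqrt (c + y ^ 2)))
      (x / (Real.sqrt (c + x ^ 2) * (1 + c + x ^ 2))) x := by
  have hpos : 0 < c + x ^ 2 := by positivity
  have hs : Real.sqrt (c + x ^ 2) > 0 := Real.sqrt_pos.mpr hpos
  have hs2 : Real.sqrt (c + x ^ 2) ^ 2 = c + x ^ 2 := Real.sq_sqrt hpos.le
  have h1 : HasDerivAt (fun y : ℝ => c + y ^ 2) (2 * x) x := by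
    simpa using ((hasDerivAt_pow 2 x).const_add c)
  have h2 : HasDerivAt (fun y : ℝ => Real.sqrt (c + y ^ 2))
      (2 * x / (2 * Real.sqrt (c + x ^ 2))) x := by
    have := (Real.hasDerivAt_sqrt hpos.ne').comp x h1
    simpa [Function.comp_def, div_eq_inv_mul, mul_comm, mul_assoc, mul_left_comm] using this
  have h5 := (Real.hasDerivAt_arctan (Real.sqrt (c + x ^ 2))).comp x h2
  refine HasDerivAt.congr_deriv (h5) (Eq.symm ?_)
  field_simp
  rw [hs2]; ring

/-- Pattern D: derivative of arctan (t / b). -/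
lemma hasDerivAt_patD (b t : ℝ) (hb : 0 < b) :
    HasDerivAt (fun s => arctan (s / b)) (b / (b ^ 2 + t ^ 2)) t := by
  have h1 : HasDerivAt (fun s : ℝ => s / b) (1 / b) t := by
    simpa using (hasDerivAt_id t).div_const b
  have h5 := (Real.hasDerivAt_arctan (t / b)).comp t h1
  refine HasDerivAt.congr_deriv (h5) (Eq.symm ?_)
  field_simp

lemma fubini_unit {F : ℝ → ℝ → ℝ}
    (hF : ContinuousOn (fun p : ℝ × ℝ => F p.1 p.2) (Icc 0 1 ×ˢ Icc 0 1)) :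
    ∫ x in (0:ℝ)..1, ∫ t in (0:ℝ)..1, F x t = ∫ t in (0:ℝ)..1, ∫ x in (0:ℝ)..1, F x t := by
  have hsub : (Ioc (0:ℝ) 1) ×ˢ (Ioc (0:ℝ) 1) ⊆ (Icc (0:ℝ) 1) ×ˢ (Icc (0:ℝ) 1) :=
    Set.prod_mono Ioc_subset_Icc_self Ioc_subset_Icc_self
  have hint : Integrable (Function.uncurry F)
      ((volume.restrict (Ioc (0:ℝ) 1)).prod (volume.restrict (Ioc (0:ℝ) 1))) := by
    rw [Measure.prod_restrict]
    have h1 : IntegrableOn (Function.uncurry F) ((Icc (0:ℝ) 1) ×ˢ (Icc (0:ℝ) 1))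
        (volume.prod volume) := by
      rw [← Measure.volume_eq_prod]
      exact hF.integrableOn_compact (isCompact_Icc.prod isCompact_Icc)
    exact h1.mono_set hsub
  simp only [intervalIntegral.integral_of_le zero_le_one]
  exact MeasureTheory.integral_integral_swap hint

lemma int_inv_sq_add {s : ℝ} (hs : 0 < s) :
    ∫ u in (0:ℝ)..1, 1 / (s ^ 2 + u ^ 2) = arctan (1 / s) / s := by
  have h := intervalIntegral.integral_eq_sub_of_hasDerivAt
    (f := fun t => arctan (t / s) / s) (f' := fun t => 1 / (s ^ 2 + t ^ 2))
    (a := 0) (b := 1) ?_ ?_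
  · rw [h]; simp [hs.ne']
  · intro t _
    have := (hasDerivAt_patD s t hs).div_const s
    refine HasDerivAt.congr_deriv (this) (Eq.symm ?_)
    field_simp
  · apply Continuous.intervalIntegrable
    exact continuous_const.div (by continuity) (fun t => by positivity)

lemma cont_W : Continuous (fun x : ℝ => arctan (Real.sqrt (2 + x ^ 2))⁻¹ /
    ((1 + x ^ 2) * Real.sqrt (2 + x ^ 2))) := by
  have h2 : ∀ x : ℝ, (0:ℝ) < 2 + x ^ 2 := fun x => by positivity
  apply Continuous.div
  · exact Real.continuous_arctan.comp (Continuous.inv₀ (by fun_prop) (fun x => by positivity))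
  · fun_prop
  · intro x
    have : (0:ℝ) < Real.sqrt (2 + x ^ 2) := Real.sqrt_pos.mpr (h2 x)
    positivity

lemma W_rep (x : ℝ) :
    ∫ t in (0:ℝ)..1, 1 / ((1 + x ^ 2) * (2 + x ^ 2 + t ^ 2))
      = arctan (Real.sqrt (2 + x ^ 2))⁻¹ / ((1 + x ^ 2) * Real.sqrt (2 + x ^ 2)) := by
  have h2 : (0:ℝ) < 2 + x ^ 2 := by positivity
  have hs : (0:ℝ) < Real.sqrt (2 + x ^ 2) := Real.sqrt_pos.mpr h2
  have hs2 : Real.sqrt (2 + x ^ 2) ^ 2 = 2 + x ^ 2 := Real.sq_sqrt h2.le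
  have h1x : (0:ℝ) < 1 + x ^ 2 := by positivity
  have : ∫ t in (0:ℝ)..1, 1 / ((1 + x ^ 2) * (2 + x ^ 2 + t ^ 2))
      = (1 + x ^ 2)⁻¹ * ∫ t in (0:ℝ)..1, 1 / (Real.sqrt (2 + x ^ 2) ^ 2 + t ^ 2) := by
    rw [← intervalIntegral.integral_const_mul]
    apply intervalIntegral.integral_congr
    intro t _
    rw [hs2]
    field_simp
  rw [this, int_inv_sq_add hs, one_div]
  field_simp

lemma W2 (t : ℝ) :
    ∫ x in (0:ℝ)..1, 1 / ((1 + x ^ 2) * (2 + x ^ 2 + t ^ 2))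
      = (1 / (1 + t ^ 2)) * (π / 4 -
          arctan (Real.sqrt (2 + t ^ 2))⁻¹ / Real.sqrt (2 + t ^ 2)) := by
  have h2 : (0:ℝ) < 2 + t ^ 2 := by positivity
  have hs : (0:ℝ) < Real.sqrt (2 + t ^ 2) := Real.sqrt_pos.mpr h2
  have hs2 : Real.sqrt (2 + t ^ 2) ^ 2 = 2 + t ^ 2 := Real.sq_sqrt h2.le
  have hstep : ∫ x in (0:ℝ)..1, 1 / ((1 + x ^ 2) * (2 + x ^ 2 + t ^ 2))
      = (1 / (1 + t ^ 2)) * ((∫ x in (0:ℝ)..1, 1 / (1 + x ^ 2)) -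
          ∫ x in (0:ℝ)..1, 1 / (Real.sqrt (2 + t ^ 2) ^ 2 + x ^ 2)) := by
    rw [← intervalIntegral.integral_sub, ← intervalIntegral.integral_const_mul]
    · apply intervalIntegral.integral_congr
      intro x _
      rw [hs2]
      have h1x : (0:ℝ) < 1 + x ^ 2 := by positivity
      have h3 : (0:ℝ) < 2 + x ^ 2 + t ^ 2 := by positivity
      field_simp
      ring
    · exact (continuous_const.div (by continuity) (fun x => by positivity)).intervalIntegrable _ _
    · exact (continuous_const.div (by continuity)
        (fun x => by positivity : ∀ x : ℝ, Real.sqrt (2 + t ^ 2) ^ 2 + x ^ 2 ≠ 0)).intervalIntegrable _ _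
  rw [hstep, int_inv_sq_add hs, integral_one_div_one_add_sq]
  simp [one_div]

lemma W_val : ∫ x in (0:ℝ)..1, arctan (Real.sqrt (2 + x ^ 2))⁻¹ /
    ((1 + x ^ 2) * Real.sqrt (2 + x ^ 2)) = π ^ 2 / 32 := by
  set W := ∫ x in (0:ℝ)..1, arctan (Real.sqrt (2 + x ^ 2))⁻¹ /
    ((1 + x ^ 2) * Real.sqrt (2 + x ^ 2)) with hW
  have hFc : Continuous (fun p : ℝ × ℝ => 1 / ((1 + p.1 ^ 2) * (2 + p.1 ^ 2 + p.2 ^ 2))) := by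
    apply continuous_const.div (by fun_prop)
    intro p
    have h1 : (0:ℝ) < 1 + p.1 ^ 2 := by positivity
    have h3 : (0:ℝ) < 2 + p.1 ^ 2 + p.2 ^ 2 := by positivity
    positivity
  have key0 : W = π / 4 * (π / 4 - 0) - W := by
    have e1 : W = ∫ x in (0:ℝ)..1, ∫ t in (0:ℝ)..1, 1 / ((1 + x ^ 2) * (2 + x ^ 2 + t ^ 2)) := by
      rw [hW]
      exact (intervalIntegral.integral_congr (fun x _ => W_rep x)).symm
    conv_lhs => rw [e1, fubini_unit hFc.continuousOn]
    have e2 : ∫ t in (0:ℝ)..1, ∫ x in (0:ℝ)..1, 1 / ((1 + x ^ 2) * (2 + x ^ 2 + t ^ 2))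
        = ∫ t in (0:ℝ)..1, (π / 4 * (1 / (1 + t ^ 2)) -
            arctan (Real.sqrt (2 + t ^ 2))⁻¹ / ((1 + t ^ 2) * Real.sqrt (2 + t ^ 2))) := by
      apply intervalIntegral.integral_congr
      intro t _
      dsimp only
      rw [W2 t]
      have h2 : (0:ℝ) < 2 + t ^ 2 := by positivity
      have hs : (0:ℝ) < Real.sqrt (2 + t ^ 2) := Real.sqrt_pos.mpr h2
      have h1t : (0:ℝ) < 1 + t ^ 2 := by positivity
      field_simp
    rw [e2, intervalIntegral.integral_sub, intervalIntegral.integral_const_mul,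
      integral_one_div_one_add_sq]
    · rw [Real.arctan_one, Real.arctan_zero, hW]
    · exact (continuous_const.mul (continuous_const.div (by continuity)
        (fun t => by positivity : ∀ t : ℝ, (1:ℝ) + t ^ 2 ≠ 0))).intervalIntegrable _ _
    · exact cont_W.intervalIntegrable _ _
  linear_combination key0 / 2

lemma arctan_sqrt_three : arctan (Real.sqrt 3) = π / 3 :=
  Real.arctan_eq_of_tan_eq Real.tan_pi_div_three
    ⟨by linarith [Real.pi_pos], by linarith [Real.pi_pos]⟩

lemma arctan_inv_sqrt_three : arctan (1 / Real.sqrt 3) = π / 6 :=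
  Real.arctan_eq_of_tan_eq Real.tan_pi_div_six
    ⟨by linarith [Real.pi_pos], by linarith [Real.pi_pos]⟩

lemma sqrt3_pos : (0:ℝ) < Real.sqrt 3 := Real.sqrt_pos.mpr (by norm_num)

lemma C_val : ∫ x in (0:ℝ)..1, 1 / ((1 + x ^ 2) * Real.sqrt (2 + x ^ 2)) = π / 6 := by
  have h := intervalIntegral.integral_eq_sub_of_hasDerivAt
    (f := fun y => arctan (y / Real.sqrt (2 + y ^ 2)))
    (f' := fun x => 1 / ((1 + x ^ 2) * Real.sqrt (2 + x ^ 2))) (a := 0) (b := 1) ?_ ?_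
  · rw [h]
    norm_num
  · intro x _
    have hs : (0:ℝ) < Real.sqrt (2 + x ^ 2) := Real.sqrt_pos.mpr (by positivity)
    refine HasDerivAt.congr_deriv (hasDerivAt_patB 2 x (by norm_num)) (Eq.symm ?_)
    rw [div_eq_div_iff (by positivity) (by positivity)]
    ring
  · apply Continuous.intervalIntegrable
    apply continuous_const.div (by fun_prop)
    intro x
    have hs : (0:ℝ) < Real.sqrt (2 + x ^ 2) := Real.sqrt_pos.mpr (by positivity)
    positivity

lemma T_val : ∫ x in (0:ℝ)..1, arctan (Real.sqrt (2 + x ^ 2)) /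
    ((1 + x ^ 2) * Real.sqrt (2 + x ^ 2)) = 5 * π ^ 2 / 96 := by
  have hsp : ∀ x : ℝ, (0:ℝ) < Real.sqrt (2 + x ^ 2) :=
    fun x => Real.sqrt_pos.mpr (by positivity)
  have hstep : ∫ x in (0:ℝ)..1, arctan (Real.sqrt (2 + x ^ 2)) /
      ((1 + x ^ 2) * Real.sqrt (2 + x ^ 2))
      = ∫ x in (0:ℝ)..1, ((π / 2) * (1 / ((1 + x ^ 2) * Real.sqrt (2 + x ^ 2))) -
          arctan (Real.sqrt (2 + x ^ 2))⁻¹ / ((1 + x ^ 2) * Real.sqrt (2 + x ^ 2))) := by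
    apply intervalIntegral.integral_congr
    intro x _
    have h := Real.arctan_inv_of_pos (hsp x)
    have h1x : (0:ℝ) < 1 + x ^ 2 := by positivity
    dsimp only
    rw [h]
    field_simp
    ring
  rw [hstep, intervalIntegral.integral_sub, intervalIntegral.integral_const_mul, C_val, W_val]
  · ring
  · apply Continuous.intervalIntegrable
    apply continuous_const.mul
    apply continuous_const.div (by fun_prop)
    intro x
    have := hsp x
    positivity
  · exact cont_W.intervalIntegrable _ _

lemma sqrt_two_sub_pos {x : ℝ} (hx : x ∈ Set.uIcc (0:ℝ) 1) : (0:ℝ) < 2 - x ^ 2 := by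
  rw [Set.uIcc_of_le (by norm_num : (0:ℝ) ≤ 1)] at hx
  nlinarith [hx.1, hx.2]

lemma contOn_inv_sqrt2sub (g : ℝ → ℝ) (hg : ContinuousOn g (Set.uIcc (0:ℝ) 1))
    (hgne : ∀ x ∈ Set.uIcc (0:ℝ) 1, g x ≠ 0) :
    ContinuousOn (fun x : ℝ => 1 / (g x * Real.sqrt (2 - x ^ 2))) (Set.uIcc (0:ℝ) 1) := by
  apply ContinuousOn.div continuousOn_const
  · exact hg.mul ((Real.continuous_sqrt.comp (by continuity)).continuousOn)
  · intro x hx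
    have h1 : (0:ℝ) < Real.sqrt (2 - x ^ 2) := Real.sqrt_pos.mpr (sqrt_two_sub_pos hx)
    exact mul_ne_zero (hgne x hx) h1.ne'

lemma E1_val : ∫ x in (0:ℝ)..1, 1 / ((1 + x ^ 2) * Real.sqrt (2 - x ^ 2))
    = π / (3 * Real.sqrt 3) := by
  have h := intervalIntegral.integral_eq_sub_of_hasDerivAt
    (f := fun y => arctan (Real.sqrt 3 * y / Real.sqrt (2 - y ^ 2)) / Real.sqrt 3)
    (f' := fun x => 1 / ((1 + x ^ 2) * Real.sqrt (2 - x ^ 2))) (a := 0) (b := 1) ?_ ?_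
  · rw [h]
    norm_num [Real.sqrt_one]
    ring
  · intro x hx
    have h2 : x ^ 2 < 2 := by
      rw [Set.uIcc_of_le (by norm_num : (0:ℝ) ≤ 1)] at hx
      nlinarith [hx.1, hx.2]
    have hs : (0:ℝ) < Real.sqrt (2 - x ^ 2) := Real.sqrt_pos.mpr (by linarith)
    have h3 : Real.sqrt 3 ^ 2 = 3 := Real.sq_sqrt (by norm_num)
    have := (hasDerivAt_patA 2 (Real.sqrt 3) x h2).div_const (Real.sqrt 3)
    refine HasDerivAt.congr_deriv (this) (Eq.symm ?_)
    rw [h3]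
    rw [div_div, div_eq_div_iff (by positivity) (by positivity)]
    have h4 : (2:ℝ) + (3 - 1) * x ^ 2 = 2 * (1 + x ^ 2) := by ring
    nlinarith [sqrt3_pos, hs]
  · exact (contOn_inv_sqrt2sub _ (by fun_prop) (fun x _ => by positivity)).intervalIntegrable

lemma E2_val {a : ℝ} (ha : 0 < a) :
    ∫ x in (0:ℝ)..1, 1 / ((2 + a ^ 2 - x ^ 2) * Real.sqrt (2 - x ^ 2))
      = arctan (a / Real.sqrt (2 + a ^ 2)) / (a * Real.sqrt (2 + a ^ 2)) := by
  set k : ℝ := a / Real.sqrt (2 + a ^ 2) with hk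
  have hsa : (0:ℝ) < Real.sqrt (2 + a ^ 2) := Real.sqrt_pos.mpr (by positivity)
  have hsa2 : Real.sqrt (2 + a ^ 2) ^ 2 = 2 + a ^ 2 := Real.sq_sqrt (by positivity)
  have hkpos : 0 < k := div_pos ha hsa
  have hk2 : k ^ 2 = a ^ 2 / (2 + a ^ 2) := by rw [hk, div_pow, hsa2]
  have h := intervalIntegral.integral_eq_sub_of_hasDerivAt
    (f := fun y => arctan (k * y / Real.sqrt (2 - y ^ 2)) / (a * Real.sqrt (2 + a ^ 2)))
    (f' := fun x => 1 / ((2 + a ^ 2 - x ^ 2) * Real.sqrt (2 - x ^ 2))) (a := 0) (b := 1) ?_ ?_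
  · rw [h]
    norm_num [Real.sqrt_one]
  · intro x hx
    have h2 : x ^ 2 < 2 := by
      rw [Set.uIcc_of_le (by norm_num : (0:ℝ) ≤ 1)] at hx
      nlinarith [hx.1, hx.2]
    have hs : (0:ℝ) < Real.sqrt (2 - x ^ 2) := Real.sqrt_pos.mpr (by linarith)
    have hd : (0:ℝ) < 2 + a ^ 2 - x ^ 2 := by nlinarith
    have := (hasDerivAt_patA 2 k x h2).div_const (a * Real.sqrt (2 + a ^ 2))
    refine HasDerivAt.congr_deriv (this) (Eq.symm ?_)
    rw [hk2]
    have h4 : (2:ℝ) + (a ^ 2 / (2 + a ^ 2) - 1) * x ^ 2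
        = 2 * (2 + a ^ 2 - x ^ 2) / (2 + a ^ 2) := by
      field_simp; ring
    rw [h4, div_div, div_eq_div_iff (by positivity) (by positivity)]
    rw [hk]
    field_simp
    linear_combination hsa2
  · exact (contOn_inv_sqrt2sub _ (by fun_prop)
      (fun x hx => by nlinarith [sqrt_two_sub_pos hx])).intervalIntegrable

lemma E_val {a : ℝ} (ha : a ∈ Set.uIcc (0:ℝ) 1) :
    ∫ x in (0:ℝ)..1, Real.sqrt (2 - x ^ 2) / ((1 + x ^ 2) * (2 + a ^ 2 - x ^ 2))
      = (1 / (a ^ 2 + 3)) * (π / Real.sqrt 3 -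
          a * arctan (a / Real.sqrt (2 + a ^ 2)) / Real.sqrt (2 + a ^ 2)) := by
  have ha0 : 0 ≤ a := by
    rw [Set.uIcc_of_le (by norm_num : (0:ℝ) ≤ 1)] at ha; exact ha.1
  set f : ℝ → ℝ := fun x => 1 / ((1 + x ^ 2) * Real.sqrt (2 - x ^ 2)) with hf
  set g : ℝ → ℝ := fun x => 1 / ((2 + a ^ 2 - x ^ 2) * Real.sqrt (2 - x ^ 2)) with hg
  have hfint : IntervalIntegrable f volume 0 1 :=
    (contOn_inv_sqrt2sub _ (by fun_prop) (fun x _ => by positivity)).intervalIntegrable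
  have hgint : IntervalIntegrable g volume 0 1 := by
    apply (contOn_inv_sqrt2sub _ (by fun_prop) ?_).intervalIntegrable
    intro x hx
    exact ne_of_gt (by nlinarith [sqrt_two_sub_pos hx, sq_nonneg a])
  have hpt : ∀ x ∈ Set.uIcc (0:ℝ) 1,
      Real.sqrt (2 - x ^ 2) / ((1 + x ^ 2) * (2 + a ^ 2 - x ^ 2))
        = (1 / (a ^ 2 + 3)) * (3 * f x - a ^ 2 * g x) := by
    intro x hx
    have h2 : (0:ℝ) < 2 - x ^ 2 := sqrt_two_sub_pos hx
    have hs : (0:ℝ) < Real.sqrt (2 - x ^ 2) := Real.sqrt_pos.mpr h2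
    have hs2 : Real.sqrt (2 - x ^ 2) ^ 2 = 2 - x ^ 2 := Real.sq_sqrt h2.le
    have hd : (0:ℝ) < 2 + a ^ 2 - x ^ 2 := by nlinarith [sq_nonneg a]
    have h1x : (0:ℝ) < 1 + x ^ 2 := by positivity
    rw [hf, hg]
    field_simp
    linear_combination (a ^ 2 + 3) * hs2
  rw [intervalIntegral.integral_congr hpt, intervalIntegral.integral_const_mul,
    intervalIntegral.integral_sub (hfint.const_mul 3) (hgint.const_mul (a ^ 2)),
    intervalIntegral.integral_const_mul, intervalIntegral.integral_const_mul, E1_val]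
  rcases eq_or_lt_of_le ha0 with h0 | hpos
  · rw [← h0]
    norm_num
    rw [eq_div_iff sqrt3_pos.ne']
    field_simp
  · rw [E2_val hpos]
    have hsa : (0:ℝ) < Real.sqrt (2 + a ^ 2) := Real.sqrt_pos.mpr (by positivity)
    field_simp

lemma S_val : ∫ a in (0:ℝ)..1, a * arctan (a / Real.sqrt (2 + a ^ 2)) /
    ((a ^ 2 + 3) * Real.sqrt (2 + a ^ 2)) = π ^ 2 / 18 - 5 * π ^ 2 / 96 := by
  have hibp := intervalIntegral.integral_mul_deriv_eq_deriv_mul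
    (u := fun a => arctan (a / Real.sqrt (2 + a ^ 2)))
    (u' := fun a => 2 / (Real.sqrt (2 + a ^ 2) * (2 + 2 * a ^ 2)))
    (v := fun a => arctan (Real.sqrt (2 + a ^ 2)))
    (v' := fun a => a / (Real.sqrt (2 + a ^ 2) * (1 + 2 + a ^ 2)))
    (a := 0) (b := 1)
    (fun x _ => hasDerivAt_patB 2 x (by norm_num))
    (fun x _ => hasDerivAt_patC 2 x (by norm_num)) ?_ ?_
  · have e1 : ∫ a in (0:ℝ)..1, a * arctan (a / Real.sqrt (2 + a ^ 2)) /
        ((a ^ 2 + 3) * Real.sqrt (2 + a ^ 2))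
        = ∫ a in (0:ℝ)..1, arctan (a / Real.sqrt (2 + a ^ 2)) *
            (a / (Real.sqrt (2 + a ^ 2) * (1 + 2 + a ^ 2))) := by
      apply intervalIntegral.integral_congr
      intro a _
      have hsa : (0:ℝ) < Real.sqrt (2 + a ^ 2) := Real.sqrt_pos.mpr (by positivity)
      dsimp only
      rw [div_eq_iff (by positivity)]
      field_simp
      ring
    have e2 : ∫ a in (0:ℝ)..1, (2 / (Real.sqrt (2 + a ^ 2) * (2 + 2 * a ^ 2))) *
        arctan (Real.sqrt (2 + a ^ 2))
        = ∫ a in (0:ℝ)..1, arctan (Real.sqrt (2 + a ^ 2)) /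
            ((1 + a ^ 2) * Real.sqrt (2 + a ^ 2)) := by
      apply intervalIntegral.integral_congr
      intro a _
      have hsa : (0:ℝ) < Real.sqrt (2 + a ^ 2) := Real.sqrt_pos.mpr (by positivity)
      dsimp only
      rw [div_mul_eq_mul_div, mul_comm, eq_div_iff (by positivity), div_mul_eq_mul_div,
        div_eq_iff (by positivity)]
      ring
    rw [e1, hibp, e2, T_val]
    norm_num
    ring
  · apply Continuous.intervalIntegrable
    apply continuous_const.div (by fun_prop)
    intro a
    have hsa : (0:ℝ) < Real.sqrt (2 + a ^ 2) := Real.sqrt_pos.mpr (by positivity)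
    positivity
  · apply Continuous.intervalIntegrable
    apply Continuous.div (by fun_prop) (by fun_prop)
    intro a
    have hsa : (0:ℝ) < Real.sqrt (2 + a ^ 2) := Real.sqrt_pos.mpr (by positivity)
    positivity

lemma J2_rep (x : ℝ) (hx : x ∈ Set.uIcc (0:ℝ) 1) :
    arctan (Real.sqrt (2 - x ^ 2))⁻¹ / (1 + x ^ 2)
      = ∫ a in (0:ℝ)..1, Real.sqrt (2 - x ^ 2) / ((1 + x ^ 2) * (2 + a ^ 2 - x ^ 2)) := by
  have h2 : (0:ℝ) < 2 - x ^ 2 := sqrt_two_sub_pos hx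
  have hs : (0:ℝ) < Real.sqrt (2 - x ^ 2) := Real.sqrt_pos.mpr h2
  have hs2 : Real.sqrt (2 - x ^ 2) ^ 2 = 2 - x ^ 2 := Real.sq_sqrt h2.le
  have h1x : (0:ℝ) < 1 + x ^ 2 := by positivity
  have h := intervalIntegral.integral_eq_sub_of_hasDerivAt
    (f := fun a => arctan (a / Real.sqrt (2 - x ^ 2)) / (1 + x ^ 2))
    (f' := fun a => Real.sqrt (2 - x ^ 2) / ((1 + x ^ 2) * (2 + a ^ 2 - x ^ 2)))
    (a := 0) (b := 1) ?_ ?_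
  · rw [h]
    simp [one_div]
  · intro a _
    have := (hasDerivAt_patD (Real.sqrt (2 - x ^ 2)) a hs).div_const (1 + x ^ 2)
    refine HasDerivAt.congr_deriv (this) (Eq.symm ?_)
    rw [hs2, div_div]
    ring
  · apply Continuous.intervalIntegrable
    apply continuous_const.div (by fun_prop)
    intro a
    have hd : (0:ℝ) < 2 + a ^ 2 - x ^ 2 := by nlinarith [sq_nonneg a]
    positivity

lemma J2_val : ∫ x in (0:ℝ)..1, arctan (Real.sqrt (2 - x ^ 2))⁻¹ / (1 + x ^ 2)
    = 5 * π ^ 2 / 96 := by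
  have hFc : ContinuousOn (fun p : ℝ × ℝ =>
      Real.sqrt (2 - p.1 ^ 2) / ((1 + p.1 ^ 2) * (2 + p.2 ^ 2 - p.1 ^ 2)))
      (Icc 0 1 ×ˢ Icc 0 1) := by
    apply ContinuousOn.div
    · exact (Real.continuous_sqrt.comp (by continuity)).continuousOn
    · fun_prop
    · rintro ⟨x, a⟩ ⟨hx, ha⟩
      simp only at *
      have hx2 : x ^ 2 ≤ 1 := by nlinarith [hx.1, hx.2]
      have hd : (0:ℝ) < 2 + a ^ 2 - x ^ 2 := by nlinarith [sq_nonneg a]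
      have h1x : (0:ℝ) < 1 + x ^ 2 := by positivity
      positivity
  have e1 : ∫ x in (0:ℝ)..1, arctan (Real.sqrt (2 - x ^ 2))⁻¹ / (1 + x ^ 2)
      = ∫ x in (0:ℝ)..1, ∫ a in (0:ℝ)..1,
          Real.sqrt (2 - x ^ 2) / ((1 + x ^ 2) * (2 + a ^ 2 - x ^ 2)) :=
    intervalIntegral.integral_congr (fun x hx => J2_rep x hx)
  rw [e1, fubini_unit hFc]
  have e2 : ∫ a in (0:ℝ)..1, ∫ x in (0:ℝ)..1,
      Real.sqrt (2 - x ^ 2) / ((1 + x ^ 2) * (2 + a ^ 2 - x ^ 2))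
      = ∫ a in (0:ℝ)..1, ((π / Real.sqrt 3) * (1 / (Real.sqrt 3 ^ 2 + a ^ 2)) -
          a * arctan (a / Real.sqrt (2 + a ^ 2)) / ((a ^ 2 + 3) * Real.sqrt (2 + a ^ 2))) := by
    apply intervalIntegral.integral_congr
    intro a ha
    dsimp only
    rw [E_val ha]
    have hsa : (0:ℝ) < Real.sqrt (2 + a ^ 2) := Real.sqrt_pos.mpr (by positivity)
    have h3 : Real.sqrt 3 ^ 2 = 3 := Real.sq_sqrt (by norm_num)
    rw [h3]
    have h3' : (0:ℝ) < a ^ 2 + 3 := by positivity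
    field_simp
    ring
  rw [e2, intervalIntegral.integral_sub, intervalIntegral.integral_const_mul,
    int_inv_sq_add sqrt3_pos, S_val, _root_.arctan_inv_sqrt_three]
  · have h3 : Real.sqrt 3 * Real.sqrt 3 = 3 := Real.mul_self_sqrt (by norm_num)
    field_simp
    nlinarith [h3, sqrt3_pos]
  · apply Continuous.intervalIntegrable
    apply continuous_const.mul
    apply continuous_const.div (by fun_prop)
    intro a
    have : (0:ℝ) < Real.sqrt 3 ^ 2 := by positivity
    positivity
  · apply Continuous.intervalIntegrable
    apply Continuous.div ?_ (by fun_prop) ?_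
    · exact continuous_id.mul (Real.continuous_arctan.comp (Continuous.div (by fun_prop)
        (by fun_prop) (fun a => ne_of_gt (Real.sqrt_pos.mpr (by positivity)))))
    ·
      intro a
      have hsa : (0:ℝ) < Real.sqrt (2 + a ^ 2) := Real.sqrt_pos.mpr (by positivity)
      positivity

lemma contOn_J2 : ContinuousOn (fun x : ℝ => arctan (Real.sqrt (2 - x ^ 2))⁻¹ / (1 + x ^ 2))
    (Set.uIcc (0:ℝ) 1) := by
  apply ContinuousOn.div
  · apply Real.continuous_arctan.comp_continuousOn
    apply ContinuousOn.inv₀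
    · exact (Real.continuous_sqrt.comp (by continuity)).continuousOn
    · exact fun x hx => ne_of_gt (Real.sqrt_pos.mpr (sqrt_two_sub_pos hx))
  · fun_prop
  · intro x _; positivity

lemma J_val : ∫ x in (0:ℝ)..1, arctan (Real.sqrt (2 - x ^ 2)) / (1 + x ^ 2)
    = 7 * π ^ 2 / 96 := by
  have hpt : ∀ x ∈ Set.uIcc (0:ℝ) 1,
      arctan (Real.sqrt (2 - x ^ 2)) / (1 + x ^ 2)
        = (π / 2) * (1 / (1 + x ^ 2)) - arctan (Real.sqrt (2 - x ^ 2))⁻¹ / (1 + x ^ 2) := by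
    intro x hx
    have hs : (0:ℝ) < Real.sqrt (2 - x ^ 2) := Real.sqrt_pos.mpr (sqrt_two_sub_pos hx)
    have h := Real.arctan_inv_of_pos hs
    have h1x : (0:ℝ) < 1 + x ^ 2 := by positivity
    rw [h]
    field_simp
    ring
  rw [intervalIntegral.integral_congr hpt, intervalIntegral.integral_sub,
    intervalIntegral.integral_const_mul, integral_one_div_one_add_sq, J2_val,
    Real.arctan_one, Real.arctan_zero]
  · ring
  · exact (continuous_const.mul (continuous_const.div (by fun_prop)
      (fun x => by positivity : ∀ x : ℝ, (1:ℝ) + x ^ 2 ≠ 0))).intervalIntegrable _ _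
  · exact contOn_J2.intervalIntegrable

lemma coxeter_tan_sub : ∫ t in (0:ℝ)..(π/4), arctan (Real.sqrt (2 - Real.tan t ^ 2))
    = 7 * π ^ 2 / 96 := by
  have hg : ∀ t ∈ Set.uIcc (0:ℝ) (π/4), HasDerivAt Real.tan (1 + Real.tan t ^ 2) t := by
    intro t ht
    rw [Set.uIcc_of_le (by positivity : (0:ℝ) ≤ π/4)] at ht
    have hcos : Real.cos t ≠ 0 := by
      have : (0:ℝ) < Real.cos t := Real.cos_pos_of_mem_Ioo
        ⟨by linarith [Real.pi_pos, ht.1], by linarith [Real.pi_pos, ht.2]⟩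
      exact this.ne'
    have := Real.hasDerivAt_tan hcos
    convert this using 1
    rw [Real.tan_eq_sin_div_cos]
    field_simp
    exact Real.cos_sq_add_sin_sq t
  set g : ℝ → ℝ := fun u => arctan (Real.sqrt (2 - u ^ 2)) / (1 + u ^ 2) with hgdef
  have hgc : Continuous g := by
    apply Continuous.div
    · exact Real.continuous_arctan.comp (Real.continuous_sqrt.comp (by continuity))
    · fun_prop
    · intro u; positivity
  have hf' : ContinuousOn (fun t => 1 + Real.tan t ^ 2) (Set.uIcc (0:ℝ) (π/4)) := by
    apply ContinuousOn.add continuousOn_const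
    apply ContinuousOn.pow
    apply ContinuousOn.div Real.continuous_sin.continuousOn Real.continuous_cos.continuousOn ?_
      |>.congr
    · intro t _; exact Real.tan_eq_sin_div_cos t
    · intro t ht
      rw [Set.uIcc_of_le (by positivity : (0:ℝ) ≤ π/4)] at ht
      exact (Real.cos_pos_of_mem_Ioo
        ⟨by linarith [Real.pi_pos, ht.1], by linarith [Real.pi_pos, ht.2]⟩).ne'
  have hsub := intervalIntegral.integral_comp_smul_deriv hg hf' hgc
  have e1 : ∫ t in (0:ℝ)..(π/4), arctan (Real.sqrt (2 - Real.tan t ^ 2))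
      = ∫ t in (0:ℝ)..(π/4), (1 + Real.tan t ^ 2) • g (Real.tan t) := by
    apply intervalIntegral.integral_congr
    intro t _
    rw [hgdef]
    dsimp only [smul_eq_mul]
    have h1 : (0:ℝ) < 1 + Real.tan t ^ 2 := by positivity
    field_simp
  rw [e1, show (∫ t in (0:ℝ)..(π/4), (1 + Real.tan t ^ 2) • g (Real.tan t))
      = ∫ t in (0:ℝ)..(π/4), (1 + Real.tan t ^ 2) • (g ∘ Real.tan) t from rfl,
    hsub, Real.tan_zero, Real.tan_pi_div_four, hgdef, J_val]

lemma coxeter_half_sub : ∫ θ in (0:ℝ)..(π/2), arctan (Real.sqrt (2 - Real.tan (θ/2) ^ 2))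
    = 7 * π ^ 2 / 48 := by
  have h := intervalIntegral.integral_comp_div (a := (0:ℝ)) (b := π/2)
    (f := fun t => arctan (Real.sqrt (2 - Real.tan t ^ 2))) (c := 2) (by norm_num)
  rw [h]
  norm_num
  rw [show π / 2 / 2 = π / 4 by ring, coxeter_tan_sub]
  ring

lemma key_id {θ : ℝ} (hθ : θ ∈ Set.uIcc (0:ℝ) (π/2)) :
    Real.arccos (Real.cos θ / (1 + 2 * Real.cos θ))
      = π - 2 * arctan (Real.sqrt (2 - Real.tan (θ/2) ^ 2)) := by
  rw [Set.uIcc_of_le (by positivity : (0:ℝ) ≤ π/2)] at hθ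
  obtain ⟨h0, h2⟩ := hθ
  have hct : 0 < Real.cos (θ/2) := Real.cos_pos_of_mem_Ioo
    ⟨by linarith [Real.pi_pos], by linarith [Real.pi_pos]⟩
  have hcθ : Real.cos θ = 2 * Real.cos (θ/2) ^ 2 - 1 := by
    rw [show θ = 2 * (θ/2) by ring, Real.cos_two_mul]
    ring_nf
  have hpy := Real.sin_sq_add_cos_sq (θ/2)
  have hcθ0 : 0 ≤ Real.cos θ := Real.cos_nonneg_of_mem_Icc
    ⟨by linarith [Real.pi_pos], h2⟩
  have htan : Real.tan (θ/2) = Real.sin (θ/2) / Real.cos (θ/2) := Real.tan_eq_sin_div_cos _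
  have htan2 : Real.tan (θ/2) ^ 2 ≤ 1 := by
    rw [htan, div_pow, div_le_one (by positivity)]
    nlinarith
  have hs2' : (0:ℝ) ≤ 2 - Real.tan (θ/2) ^ 2 := by linarith
  set s := Real.sqrt (2 - Real.tan (θ/2) ^ 2) with hsdef
  have hs2 : s ^ 2 = 2 - Real.tan (θ/2) ^ 2 := Real.sq_sqrt hs2'
  have hs0 : 0 ≤ s := Real.sqrt_nonneg _
  have harc : arctan s < π/2 := Real.arctan_lt_pi_div_two s
  have harc0 : 0 ≤ arctan s := by
    rw [← Real.arctan_zero]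
    exact Real.arctan_strictMono.monotone hs0
  have hw : Real.cos (π - 2 * arctan s) = (s ^ 2 - 1) / (s ^ 2 + 1) := by
    rw [Real.cos_pi_sub, Real.cos_two_mul, Real.cos_sq_arctan]
    have : (0:ℝ) < 1 + s ^ 2 := by positivity
    field_simp
    ring
  have hz : Real.cos θ / (1 + 2 * Real.cos θ) = (s ^ 2 - 1) / (s ^ 2 + 1) := by
    rw [hs2, htan, hcθ]
    have hd : (0:ℝ) < 1 + 2 * (2 * Real.cos (θ/2) ^ 2 - 1) := by nlinarith
    rw [div_eq_div_iff hd.ne' (by rw [← htan]; nlinarith [htan2])]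
    field_simp
    nlinarith [hpy, hct]
  rw [hz, ← hw, Real.arccos_cos (by linarith) (by linarith)]

theorem coxeter_first_integral :
    ∫ θ in (0:ℝ)..(π/2), Real.arccos (Real.cos θ / (1 + 2 * Real.cos θ))
      = 5 * π ^ 2 / 24 := by
  have hcont : ContinuousOn (fun θ : ℝ => arctan (Real.sqrt (2 - Real.tan (θ/2) ^ 2)))
      (Set.uIcc (0:ℝ) (π/2)) := by
    apply (Real.continuous_arctan.comp Real.continuous_sqrt).comp_continuousOn
    apply ContinuousOn.sub continuousOn_const
    apply ContinuousOn.pow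
    apply ContinuousOn.div
      (Continuous.continuousOn (by continuity : Continuous fun θ : ℝ => Real.sin (θ/2)))
      (Continuous.continuousOn (by continuity : Continuous fun θ : ℝ => Real.cos (θ/2)))
      ?_ |>.congr
    · intro θ _
      exact Real.tan_eq_sin_div_cos _
    · intro θ hθ
      rw [Set.uIcc_of_le (by positivity : (0:ℝ) ≤ π/2)] at hθ
      exact (Real.cos_pos_of_mem_Ioo (by constructor <;>
        [linarith [Real.pi_pos, hθ.1]; linarith [Real.pi_pos, hθ.2]] :
        θ/2 ∈ Set.Ioo (-(π/2)) (π/2))).ne'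
  have e1 : ∫ θ in (0:ℝ)..(π/2), Real.arccos (Real.cos θ / (1 + 2 * Real.cos θ))
      = ∫ θ in (0:ℝ)..(π/2),
          ((π : ℝ) - 2 * arctan (Real.sqrt (2 - Real.tan (θ/2) ^ 2))) :=
    intervalIntegral.integral_congr (fun θ hθ => key_id hθ)
  rw [e1, intervalIntegral.integral_sub intervalIntegrable_const
      ((hcont.intervalIntegrable).const_mul 2),
    intervalIntegral.integral_const_mul, coxeter_half_sub, intervalIntegral.integral_const]
  simp only [smul_eq_mul]
  ring
end

section
/- For every λ > 0, the function I(λ) = ∫_{0}^{π/2} arccos( cos θ / (1 + λ cos θ) ) dθ is differentiable at λ, with derivative I′(λ) = ∫_{0}^{π/2} cos²θ / ( (1 + λ cos θ) · √( (1 + λ cos θ)² − cos²θ ) ) dθ. Formally: for all λ > 0, HasDerivAt (fun μ => ∫_{0}^{π/2} Real.arccos (cos θ / (1 + μ cos θ)) dθ) ( ∫_{0}^{π/2} cos²θ / ((1 + λ cos θ) * Real.sqrt ((1 + λ cos θ)² − cos²θ)) dθ ) λ. -/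
open Real MeasureTheory intervalIntegral Metric

/-- Key pointwise derivative lemma. -/
lemma key_hasDerivAt {c μ : ℝ} (hc0 : 0 ≤ c) (hc1 : c ≤ 1) (hμ : 0 < μ) :
    HasDerivAt (fun x : ℝ => Real.arccos (c / (1 + x * c)))
      (c ^ 2 / ((1 + μ * c) * Real.sqrt ((1 + μ * c) ^ 2 - c ^ 2))) μ := by
  have hd : 0 < 1 + μ * c := by nlinarith
  have hclt : c < 1 + μ * c := by nlinarith
  have hD : 0 < (1 + μ * c) ^ 2 - c ^ 2 := by nlinarith
  set u : ℝ := c / (1 + μ * c) with hu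
  have hu1 : u < 1 := (div_lt_one hd).2 hclt
  have hu0 : 0 ≤ u := div_nonneg hc0 hd.le
  have hinner : HasDerivAt (fun x : ℝ => c / (1 + x * c)) (-(c * c) / (1 + μ * c) ^ 2) μ := by
    have h1 : HasDerivAt (fun x : ℝ => 1 + x * c) c μ := by
      simpa using ((hasDerivAt_id μ).mul_const c).const_add 1
    have := (hasDerivAt_const μ c).div h1 hd.ne'
    exact this.congr_deriv (by ring)
  have harc : HasDerivAt Real.arccos (-(1 / Real.sqrt (1 - u ^ 2))) u :=
    Real.hasDerivAt_arccos (by linarith) hu1.ne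
  have hcomp := harc.comp μ hinner
  refine hcomp.congr_deriv ?_
  have h1u : 1 - u ^ 2 = ((1 + μ * c) ^ 2 - c ^ 2) / (1 + μ * c) ^ 2 := by
    rw [eq_div_iff (by positivity), hu, div_pow]
    field_simp
  have hsq : Real.sqrt (1 - u ^ 2)
      = Real.sqrt ((1 + μ * c) ^ 2 - c ^ 2) / (1 + μ * c) := by
    rw [h1u, Real.sqrt_div hD.le, Real.sqrt_sq hd.le]
  have hS : 0 < Real.sqrt ((1 + μ * c) ^ 2 - c ^ 2) := Real.sqrt_pos.2 hD
  rw [hsq]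
  field_simp

theorem coxeter_family_hasDerivAt (lam : ℝ) (hlam : 0 < lam) :
    HasDerivAt
      (fun μ : ℝ => ∫ θ in (0:ℝ)..(π/2), Real.arccos (Real.cos θ / (1 + μ * Real.cos θ)))
      (∫ θ in (0:ℝ)..(π/2),
        Real.cos θ ^ 2 /
          ((1 + lam * Real.cos θ) *
            Real.sqrt ((1 + lam * Real.cos θ) ^ 2 - Real.cos θ ^ 2)))
      lam := by
  set a : ℝ := lam / 2 with ha
  have ha0 : 0 < a := by positivity
  set m : ℝ := min 1 a with hm
  have hm0 : 0 < m := lt_min one_pos ha0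
  set F : ℝ → ℝ → ℝ := fun x θ => Real.arccos (Real.cos θ / (1 + x * Real.cos θ))
  set F' : ℝ → ℝ → ℝ := fun x θ =>
    Real.cos θ ^ 2 / ((1 + x * Real.cos θ) * Real.sqrt ((1 + x * Real.cos θ) ^ 2 - Real.cos θ ^ 2))
  have hπ := Real.pi_pos
  have hθmem : ∀ θ ∈ Set.uIoc (0:ℝ) (π/2), 0 ≤ Real.cos θ ∧ Real.cos θ ≤ 1 := by
    intro θ hθ
    rw [Set.uIoc_of_le (by positivity)] at hθ
    exact ⟨Real.cos_nonneg_of_mem_Icc ⟨by linarith [hθ.1], hθ.2⟩, Real.cos_le_one θ⟩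
  have hxmem : ∀ x ∈ ball lam a, a < x := by
    intro x hx
    have := abs_lt.1 (mem_ball_iff_norm.1 hx)
    simp only [ha] at *; linarith [this.1]
  have key := intervalIntegral.hasDerivAt_integral_of_dominated_loc_of_deriv_le
    (F := F) (F' := F') (x₀ := lam) (a := (0:ℝ)) (b := π/2) (μ := volume)
    (bound := fun _ => 1 / Real.sqrt m) (ball_mem_nhds lam ha0)
    ?_ ?_ ?_ ?_ ?_ ?_
  · exact key.2
  · -- measurability of F x
    filter_upwards with x
    apply Measurable.aestronglyMeasurable
    exact Real.continuous_arccos.measurable.comp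
      (Real.measurable_cos.div ((measurable_const.mul Real.measurable_cos).const_add 1))
  · -- integrability of F lam
    apply ContinuousOn.intervalIntegrable
    intro θ hθ
    rw [Set.uIcc_of_le (by positivity)] at hθ
    have hc : 0 ≤ Real.cos θ := Real.cos_nonneg_of_mem_Icc ⟨by linarith [hθ.1], hθ.2⟩
    have hd : (1 : ℝ) + lam * Real.cos θ ≠ 0 := by nlinarith
    exact Real.continuous_arccos.continuousAt.comp_continuousWithinAt
      (Real.continuous_cos.continuousWithinAt.div
        ((continuous_const.add (continuous_const.mul Real.continuous_cos)).continuousWithinAt) hd)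
  · -- measurability of F' lam
    apply Measurable.aestronglyMeasurable
    apply Measurable.div
    · exact Real.measurable_cos.pow_const 2
    · exact ((measurable_const.mul Real.measurable_cos).const_add 1).mul
        (Real.continuous_sqrt.measurable.comp
          ((((measurable_const.mul Real.measurable_cos).const_add 1).pow_const 2).sub
            (Real.measurable_cos.pow_const 2)))
  · -- bound
    filter_upwards with θ hθ x hx
    obtain ⟨hc0, hc1⟩ := hθmem θ hθ
    have hax := hxmem x hx
    have hx0 : 0 < x := lt_trans ha0 hax
    set c := Real.cos θ
    have hd : (0:ℝ) < 1 + x * c := by nlinarith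
    have hD : m ≤ (1 + x * c) ^ 2 - c ^ 2 := by
      have hfac : (1 + x * c) ^ 2 - c ^ 2 = (1 + (x - 1) * c) * (1 + (x + 1) * c) := by ring
      have hq : (1:ℝ) ≤ 1 + (x + 1) * c := by nlinarith
      rcases le_total a 1 with h | h
      · have hma : m = a := min_eq_right h
        have hp : a ≤ 1 + (x - 1) * c := by
          nlinarith [mul_nonneg (by linarith : (0:ℝ) ≤ 1 - a) (by linarith : (0:ℝ) ≤ 1 - c),
            mul_nonneg hc0 (by linarith : (0:ℝ) ≤ x - a)]
        have := mul_le_mul hp hq one_pos.le (by linarith)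
        rw [hma, hfac]; linarith
      · have hma : m = 1 := min_eq_left h
        have hp : (1:ℝ) ≤ 1 + (x - 1) * c := by
          nlinarith [mul_nonneg hc0 (by linarith : (0:ℝ) ≤ x - 1)]
        have := mul_le_mul hp hq one_pos.le (by linarith)
        rw [hma, hfac]; linarith
    have hD0 : 0 < (1 + x * c) ^ 2 - c ^ 2 := lt_of_lt_of_le hm0 hD
    have hS : Real.sqrt m ≤ Real.sqrt ((1 + x * c) ^ 2 - c ^ 2) := Real.sqrt_le_sqrt hD
    have hSm : 0 < Real.sqrt m := Real.sqrt_pos.2 hm0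
    have hnn : 0 ≤ F' x θ := by
      apply div_nonneg (by positivity)
      positivity
    rw [Real.norm_of_nonneg hnn]
    show c ^ 2 / ((1 + x * c) * Real.sqrt ((1 + x * c) ^ 2 - c ^ 2)) ≤ 1 / Real.sqrt m
    apply div_le_div₀ (by positivity) (by nlinarith) (by positivity)
    calc Real.sqrt m = 1 * Real.sqrt m := (one_mul _).symm
      _ ≤ (1 + x * c) * Real.sqrt ((1 + x * c) ^ 2 - c ^ 2) := by
          apply mul_le_mul (by nlinarith) hS hSm.le hd.le
  · exact intervalIntegrable_const
  · -- differentiability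
    filter_upwards with θ hθ x hx
    obtain ⟨hc0, hc1⟩ := hθmem θ hθ
    exact key_hasDerivAt hc0 hc1 (lt_trans ha0 (hxmem x hx))
end

section
/- (Fundamental theorem of calculus for the parametric family.) Writing I(λ) = ∫_{0}^{π/2} arccos( cos θ / (1 + λ cos θ) ) dθ, one has I(2) − I(0) = ∫_{0}^{2} ( ∫_{0}^{π/2} cos²θ / ( (1 + s cos θ) · √( (1 + s cos θ)² − cos²θ ) ) dθ ) ds; explicitly, ∫_{0}^{π/2} arccos( cos θ / (1 + 2 cos θ) ) dθ − ∫_{0}^{π/2} arccos( cos θ ) dθ equals the stated double integral. -/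
open Real
open MeasureTheory Set


lemma fct_deriv {c : ℝ} (hc0 : 0 ≤ c) (hc1 : c < 1) {s : ℝ} (hs : 0 ≤ s) :
    HasDerivAt (fun t => Real.arccos (c / (1 + t * c)))
      (c ^ 2 / ((1 + s * c) * Real.sqrt ((1 + s * c) ^ 2 - c ^ 2))) s := by
  have hsc : 0 ≤ s * c := mul_nonneg hs hc0
  have hpos : 0 < 1 + s * c := by linarith
  have hne : (1 + s * c) ≠ 0 := ne_of_gt hpos
  have hu : HasDerivAt (fun t => c / (1 + t * c)) (c * (-c / (1 + s * c) ^ 2)) s := by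
    have h1 : HasDerivAt (fun t : ℝ => 1 + t * c) c s := by
      simpa using ((hasDerivAt_id s).mul_const c).const_add 1
    simpa [div_eq_mul_inv] using (h1.inv hne).const_mul c
  set u := c / (1 + s * c) with hu_def
  have hu0 : 0 ≤ u := div_nonneg hc0 hpos.le
  have hu1 : u < 1 := by
    rw [hu_def, div_lt_one hpos]; linarith
  have harc := (Real.hasDerivAt_arccos (by linarith : u ≠ -1) (ne_of_lt hu1)).comp s hu
  have hDpos : 0 < (1 + s * c) ^ 2 - c ^ 2 := by nlinarith
  have hkey : (1 : ℝ) - u ^ 2 = ((1 + s * c) ^ 2 - c ^ 2) / (1 + s * c) ^ 2 := by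
    rw [hu_def]; field_simp
  have hsq : Real.sqrt (1 - u ^ 2) = Real.sqrt ((1 + s * c) ^ 2 - c ^ 2) / (1 + s * c) := by
    rw [hkey, Real.sqrt_div hDpos.le, Real.sqrt_sq hpos.le]
  have hsqpos : 0 < Real.sqrt ((1 + s * c) ^ 2 - c ^ 2) := Real.sqrt_pos.2 hDpos
  refine harc.congr_deriv ?_
  rw [hsq]
  field_simp

lemma fct_cont {c : ℝ} (hc0 : 0 ≤ c) (hc1 : c < 1) :
    ContinuousOn (fun s => c ^ 2 / ((1 + s * c) * Real.sqrt ((1 + s * c) ^ 2 - c ^ 2)))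
      (Icc (0:ℝ) 2) := by
  apply ContinuousOn.div continuousOn_const
  · fun_prop
  · intro s hs
    have hsc : 0 ≤ s * c := mul_nonneg hs.1 hc0
    have hpos : 0 < 1 + s * c := by linarith
    have hDpos : 0 < (1 + s * c) ^ 2 - c ^ 2 := by nlinarith
    positivity

lemma fct_ftc {c : ℝ} (hc0 : 0 ≤ c) (hc1 : c < 1) :
    ∫ s in (0:ℝ)..2, c ^ 2 / ((1 + s * c) * Real.sqrt ((1 + s * c) ^ 2 - c ^ 2))
      = Real.arccos (c / (1 + 2 * c)) - Real.arccos c := by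
  have h02 : (0:ℝ) ≤ 2 := by norm_num
  have key := intervalIntegral.integral_eq_sub_of_hasDerivAt
    (f := fun t => Real.arccos (c / (1 + t * c)))
    (f' := fun s => c ^ 2 / ((1 + s * c) * Real.sqrt ((1 + s * c) ^ 2 - c ^ 2)))
    (a := 0) (b := 2)
    (fun s hs => by
      rw [Set.uIcc_of_le h02] at hs
      exact fct_deriv hc0 hc1 hs.1)
    (by
      apply ContinuousOn.intervalIntegrable
      rw [Set.uIcc_of_le h02]
      exact fct_cont hc0 hc1)
  rw [key]
  norm_num [mul_comm]

theorem coxeter_ftc_identity :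
    (∫ θ in (0:ℝ)..(π/2), Real.arccos (Real.cos θ / (1 + 2 * Real.cos θ)))
      - (∫ θ in (0:ℝ)..(π/2), Real.arccos (Real.cos θ))
      = ∫ s in (0:ℝ)..2, ∫ θ in (0:ℝ)..(π/2),
          Real.cos θ ^ 2 /
            ((1 + s * Real.cos θ) *
              Real.sqrt ((1 + s * Real.cos θ) ^ 2 - Real.cos θ ^ 2)) := by
  have hpi2 : (0:ℝ) ≤ π / 2 := by positivity
  have h02 : (0:ℝ) ≤ 2 := by norm_num
  set f : ℝ → ℝ → ℝ := fun s θ =>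
    Real.cos θ ^ 2 / ((1 + s * Real.cos θ) *
      Real.sqrt ((1 + s * Real.cos θ) ^ 2 - Real.cos θ ^ 2)) with hf_def
  set μ := volume.restrict (Ioc (0:ℝ) 2) with hμ
  set ν := volume.restrict (Ioc (0:ℝ) (π/2)) with hν
  -- facts about θ in the range
  have hθfacts : ∀ θ ∈ Ioc (0:ℝ) (π/2), 0 ≤ Real.cos θ ∧ Real.cos θ < 1 := by
    intro θ hθ
    refine ⟨Real.cos_nonneg_of_mem_Icc ⟨by linarith [hθ.1], hθ.2⟩, ?_⟩
    have := Real.cos_lt_cos_of_nonneg_of_le_pi le_rfl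
      (by linarith [Real.pi_pos, hθ.2] : θ ≤ π) hθ.1
    simpa using this
  -- measurability
  have hmeas : Measurable (Function.uncurry f) := by
    apply Measurable.div
    · fun_prop
    · fun_prop
  -- integrability on the product
  have hIntProd : Integrable (Function.uncurry f) (μ.prod ν) := by
    rw [MeasureTheory.integrable_prod_iff' hmeas.aestronglyMeasurable]
    constructor
    · filter_upwards [ae_restrict_mem measurableSet_Ioc] with θ hθ
      obtain ⟨hc0, hc1⟩ := hθfacts θ hθ
      have hIOn : IntegrableOn (fun s => f s θ) (Icc (0:ℝ) 2) volume :=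
        (fct_cont hc0 hc1).integrableOn_compact isCompact_Icc
      exact hIOn.mono_set Ioc_subset_Icc_self
    · apply MeasureTheory.Integrable.mono' (g := fun _ => π)
      · rw [hν]
        exact (MeasureTheory.integrableOn_const_iff).mpr (Or.inr measure_Ioc_lt_top)
      · exact ((hmeas.norm.stronglyMeasurable).integral_prod_left').aestronglyMeasurable
      · filter_upwards [ae_restrict_mem measurableSet_Ioc] with θ hθ
        obtain ⟨hc0, hc1⟩ := hθfacts θ hθ
        have hnorm : ∀ s ∈ Ioc (0:ℝ) 2, ‖Function.uncurry f (s, θ)‖ = f s θ := by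
          intro s hs
          have hsc : 0 ≤ s * Real.cos θ := mul_nonneg hs.1.le hc0
          have : 0 ≤ f s θ := by
            apply div_nonneg (sq_nonneg _)
            apply mul_nonneg (by linarith) (Real.sqrt_nonneg _)
          simpa [Function.uncurry] using abs_of_nonneg this
        have heq : ∫ s, ‖Function.uncurry f (s, θ)‖ ∂μ = ∫ s, f s θ ∂μ := by
          rw [hμ]
          exact MeasureTheory.setIntegral_congr_fun measurableSet_Ioc hnorm
        rw [heq]
        have : ∫ s, f s θ ∂μ
            = Real.arccos (Real.cos θ / (1 + 2 * Real.cos θ)) - Real.arccos (Real.cos θ) := by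
          rw [hμ, ← intervalIntegral.integral_of_le h02]
          exact fct_ftc hc0 hc1
        rw [this, Real.norm_eq_abs, abs_le]
        constructor
        · linarith [Real.arccos_nonneg (Real.cos θ / (1 + 2 * Real.cos θ)),
            Real.arccos_le_pi (Real.cos θ)]
        · linarith [Real.arccos_nonneg (Real.cos θ),
            Real.arccos_le_pi (Real.cos θ / (1 + 2 * Real.cos θ))]
  have hswap := MeasureTheory.integral_integral_swap (f := f) hIntProd
  -- rewrite RHS as iterated set integrals
  have hRHS : (∫ s in (0:ℝ)..2, ∫ θ in (0:ℝ)..(π/2), f s θ)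
      = ∫ s, ∫ θ, f s θ ∂ν ∂μ := by
    rw [intervalIntegral.integral_of_le h02]
    congr 1
    funext s
    rw [intervalIntegral.integral_of_le hpi2]
  rw [hRHS, hswap]
  have hinner : ∀ θ ∈ Ioc (0:ℝ) (π/2),
      (∫ s, f s θ ∂μ)
        = Real.arccos (Real.cos θ / (1 + 2 * Real.cos θ)) - Real.arccos (Real.cos θ) := by
    intro θ hθ
    obtain ⟨hc0, hc1⟩ := hθfacts θ hθ
    rw [hμ, ← intervalIntegral.integral_of_le h02]
    exact fct_ftc hc0 hc1
  rw [hν, MeasureTheory.setIntegral_congr_fun measurableSet_Ioc hinner,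
    ← intervalIntegral.integral_of_le hpi2]
  rw [intervalIntegral.integral_sub]
  · apply ContinuousOn.intervalIntegrable
    rw [Set.uIcc_of_le hpi2]
    apply Real.continuous_arccos.comp_continuousOn
    apply ContinuousOn.div (Real.continuous_cos.continuousOn) (by fun_prop)
    intro θ hθ
    have : 0 ≤ Real.cos θ := Real.cos_nonneg_of_mem_Icc ⟨by linarith [hθ.1], hθ.2⟩
    positivity
  · exact (Real.continuous_arccos.comp Real.continuous_cos).intervalIntegrable _ _
end

section
/- (Convergence of the improper parameter integral.) The function s ↦ ∫_{0}^{π/2} cos²θ / ( (1 + s cos θ) · √( (1 + s cos θ)² − cos²θ ) ) dθ is interval integrable on [0, 2] (in the sense IntervalIntegrable with respect to Lebesgue measure on [0,2]); in particular the improper integral ∫_{0}^{2} I′(s) ds = lim_{ε→0⁺} ∫_{ε}^{2} I′(s) ds exists and is finite. -/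
open Real MeasureTheory

lemma cox_meas : Measurable fun p : ℝ × ℝ => Real.cos p.2 ^ 2 /
    ((1 + p.1 * Real.cos p.2) * Real.sqrt ((1 + p.1 * Real.cos p.2) ^ 2 - Real.cos p.2 ^ 2)) := by
  fun_prop

lemma cox_sm : StronglyMeasurable (fun s : ℝ => ∫ θ in (0:ℝ)..(π/2),
    Real.cos θ ^ 2 / ((1 + s * Real.cos θ) * Real.sqrt ((1 + s * Real.cos θ) ^ 2 - Real.cos θ ^ 2))) := by
  have h := (cox_meas.stronglyMeasurable).integral_prod_right'
    (ν := volume.restrict (Set.Ioc 0 (π/2)))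
  convert h using 2 with s
  rw [intervalIntegral.integral_of_le (by positivity)]

lemma cox_inner_bound {s θ : ℝ} (hs0 : 0 < s) (hs2 : s ≤ 2)
    (hθ : θ ∈ Set.Ioc (0:ℝ) (π/2)) :
    |Real.cos θ ^ 2 / ((1 + s * Real.cos θ) * Real.sqrt ((1 + s * Real.cos θ) ^ 2 - Real.cos θ ^ 2))|
      ≤ Real.sqrt 2 / Real.sqrt s := by
  set c := Real.cos θ with hc
  have hc0 : 0 ≤ c := Real.cos_nonneg_of_mem_Icc ⟨by linarith [hθ.1, Real.pi_pos], hθ.2⟩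
  have hc1 : c ≤ 1 := Real.cos_le_one θ
  have h1 : (1:ℝ) ≤ 1 + s * c := by nlinarith
  have hD : s / 2 ≤ (1 + s * c) ^ 2 - c ^ 2 := by nlinarith [mul_nonneg hc0 hs0.le]
  have hsq : Real.sqrt (s / 2) ≤ Real.sqrt ((1 + s * c) ^ 2 - c ^ 2) := Real.sqrt_le_sqrt hD
  have hsq2 : 0 < Real.sqrt (s / 2) := Real.sqrt_pos.2 (by linarith)
  have hden : Real.sqrt (s / 2) ≤ (1 + s * c) * Real.sqrt ((1 + s * c) ^ 2 - c ^ 2) := by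
    calc Real.sqrt (s / 2) ≤ Real.sqrt ((1 + s * c) ^ 2 - c ^ 2) := hsq
    _ ≤ (1 + s * c) * Real.sqrt ((1 + s * c) ^ 2 - c ^ 2) := by
        nlinarith [Real.sqrt_nonneg ((1 + s * c) ^ 2 - c ^ 2)]
  have hnum : c ^ 2 ≤ 1 := by nlinarith
  rw [abs_of_nonneg (by positivity)]
  have hmul : Real.sqrt (s / 2) * Real.sqrt 2 = Real.sqrt s := by
    rw [← Real.sqrt_mul (by positivity)]; norm_num
  have h2 : Real.sqrt 2 / Real.sqrt s = 1 / Real.sqrt (s / 2) := by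
    rw [← hmul]; field_simp
  rw [h2]
  exact div_le_div₀ zero_le_one hnum hsq2 hden

lemma cox_outer_bound {s : ℝ} (hs0 : 0 < s) (hs2 : s ≤ 2) :
    ‖∫ θ in (0:ℝ)..(π/2), Real.cos θ ^ 2 /
      ((1 + s * Real.cos θ) * Real.sqrt ((1 + s * Real.cos θ) ^ 2 - Real.cos θ ^ 2))‖
      ≤ Real.sqrt 2 / Real.sqrt s * (π/2) := by
  have h := intervalIntegral.norm_integral_le_of_norm_le_const
    (C := Real.sqrt 2 / Real.sqrt s) (a := (0:ℝ)) (b := π/2)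
    (f := fun θ => Real.cos θ ^ 2 /
      ((1 + s * Real.cos θ) * Real.sqrt ((1 + s * Real.cos θ) ^ 2 - Real.cos θ ^ 2)))
    (fun θ hθ => by
      rw [Set.uIoc_of_le (by positivity)] at hθ
      rw [Real.norm_eq_abs]
      exact cox_inner_bound hs0 hs2 hθ)
  calc _ ≤ Real.sqrt 2 / Real.sqrt s * |π/2 - 0| := h
  _ = Real.sqrt 2 / Real.sqrt s * (π/2) := by
      rw [sub_zero, abs_of_nonneg (by positivity)]

lemma cox_integrableOn : IntegrableOn (fun s : ℝ => ∫ θ in (0:ℝ)..(π/2),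
    Real.cos θ ^ 2 / ((1 + s * Real.cos θ) * Real.sqrt ((1 + s * Real.cos θ) ^ 2 - Real.cos θ ^ 2)))
    (Set.Ioc 0 2) volume := by
  have hg : IntervalIntegrable (fun s : ℝ => Real.sqrt 2 * (π/2) * s ^ (-(1/2) : ℝ))
      volume 0 2 := (intervalIntegral.intervalIntegrable_rpow' (by norm_num)).const_mul _
  have hg' : IntegrableOn (fun s : ℝ => Real.sqrt 2 * (π/2) * s ^ (-(1/2) : ℝ))
      (Set.Ioc 0 2) volume := by
    rw [intervalIntegrable_iff_integrableOn_Ioc_of_le (by norm_num)] at hg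
    exact hg
  refine MeasureTheory.Integrable.mono hg' (cox_sm.aestronglyMeasurable.restrict) ?_
  filter_upwards [ae_restrict_mem measurableSet_Ioc] with s hs
  have hs0 : 0 < s := hs.1
  have heq : s ^ (-(1/2) : ℝ) = 1 / Real.sqrt s := by
    rw [Real.rpow_neg hs0.le, Real.sqrt_eq_rpow]; norm_num
  calc ‖∫ θ in (0:ℝ)..(π/2), Real.cos θ ^ 2 /
        ((1 + s * Real.cos θ) * Real.sqrt ((1 + s * Real.cos θ) ^ 2 - Real.cos θ ^ 2))‖
      ≤ Real.sqrt 2 / Real.sqrt s * (π/2) := cox_outer_bound hs0 hs.2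
  _ ≤ ‖Real.sqrt 2 * (π/2) * s ^ (-(1/2) : ℝ)‖ := by
      rw [heq, Real.norm_eq_abs, abs_of_nonneg (by positivity)]
      ring_nf
      exact le_refl _

theorem coxeter_improper_integrable :
    IntervalIntegrable
      (fun s : ℝ => ∫ θ in (0:ℝ)..(π/2),
        Real.cos θ ^ 2 /
          ((1 + s * Real.cos θ) *
            Real.sqrt ((1 + s * Real.cos θ) ^ 2 - Real.cos θ ^ 2)))
      volume 0 2 ∧
    Filter.Tendsto
      (fun ε : ℝ => ∫ s in ε..2, ∫ θ in (0:ℝ)..(π/2),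
        Real.cos θ ^ 2 /
          ((1 + s * Real.cos θ) *
            Real.sqrt ((1 + s * Real.cos θ) ^ 2 - Real.cos θ ^ 2)))
      (nhdsWithin 0 (Set.Ioi 0))
      (nhds (∫ s in (0:ℝ)..2, ∫ θ in (0:ℝ)..(π/2),
        Real.cos θ ^ 2 /
          ((1 + s * Real.cos θ) *
            Real.sqrt ((1 + s * Real.cos θ) ^ 2 - Real.cos θ ^ 2)))) := by
  have hii : IntervalIntegrable
      (fun s : ℝ => ∫ θ in (0:ℝ)..(π/2),
        Real.cos θ ^ 2 /
          ((1 + s * Real.cos θ) *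
            Real.sqrt ((1 + s * Real.cos θ) ^ 2 - Real.cos θ ^ 2))) volume 0 2 := by
    rw [intervalIntegrable_iff_integrableOn_Ioc_of_le (by norm_num)]
    exact cox_integrableOn
  refine ⟨hii, ?_⟩
  have hIcc : IntegrableOn (fun s : ℝ => ∫ θ in (0:ℝ)..(π/2),
      Real.cos θ ^ 2 / ((1 + s * Real.cos θ) * Real.sqrt ((1 + s * Real.cos θ) ^ 2 - Real.cos θ ^ 2)))
      (Set.uIcc 0 2) volume := by
    rw [Set.uIcc_of_le (by norm_num), integrableOn_Icc_iff_integrableOn_Ioc]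
    exact cox_integrableOn
  have hcont := intervalIntegral.continuousOn_primitive_interval_left (a := (0:ℝ)) (b := 2)
    (μ := volume) hIcc
  have h0 : (0:ℝ) ∈ Set.uIcc (0:ℝ) 2 := Set.left_mem_uIcc
  have hmem : Set.uIcc (0:ℝ) 2 ∈ nhdsWithin (0:ℝ) (Set.Ioi 0) := by
    rw [Set.uIcc_of_le (by norm_num)]
    exact Icc_mem_nhdsGT_of_mem ⟨le_refl 0, by norm_num⟩
  exact (hcont 0 h0).mono_of_mem_nhdsWithin hmem
end
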